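/- Let Ω ⊂ ℝⁿ be open and E ⊂ Ω a set of finite perimeter. Then E is outward minimizing in Ω (i.e., P(E) ≤ P(F) for all F with E ⊂ F ⊂ Ω) if and only if P(E ∩ G) ≤ P(G) for all sets of finite perimeter G ⊂ Ω. -/

import Mathlib

open MeasureTheory ENNReal Set Filter Bornology Topology

noncomputable section

abbrev Euc (n : ℕ) := EuclideanSpace ℝ (Fin n)

variable {n : ℕ}

/-- Divergence of a vector field on `ℝⁿ`. -/
def diverg (ξ : Euc n → Euc n) (x : Euc n) : ℝ :=
  ∑ i, fderiv ℝ ξ x (EuclideanSpace.single i 1) i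

/-- Admissible test vector fields: `C¹`, compactly supported, bounded by one. -/
def testVF (n : ℕ) : Set (Euc n → Euc n) :=
  {ξ | ContDiff ℝ 1 ξ ∧ HasCompactSupport ξ ∧ ∀ x, ‖ξ x‖ ≤ 1}

/-- De Giorgi perimeter of a set in `ℝⁿ`. -/
def perimeter (E : Set (Euc n)) : ℝ≥0∞ :=
  ⨆ ξ ∈ testVF n, ENNReal.ofReal (∫ x in E, diverg ξ x)

/-- Total variation of a function on `ℝⁿ`. -/
def totalVariation (u : Euc n → ℝ) : ℝ≥0∞ :=
  ⨆ ξ ∈ testVF n, ENNReal.ofReal (∫ x, u x * diverg ξ x)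

/-- `E` is outward minimizing in `Ω`. -/
def OutwardMinimizing (Ω E : Set (Euc n)) : Prop :=
  ∀ F : Set (Euc n), MeasurableSet F → E ⊆ F → F ⊆ Ω → perimeter E ≤ perimeter F

/-- Distance to the topological boundary of `F`. -/
def bdist (F : Set (Euc n)) (x : Euc n) : ℝ := Metric.infDist x (frontier F)

/-- Signed distance to the boundary of `F`: negative inside `F`, positive outside. -/
def sdist (F : Set (Euc n)) (x : Euc n) : ℝ :=
  haveI := Classical.dec (x ∈ F)
  if x ∈ F then -(bdist F x) else bdist F x

/-- The Almgren–Taylor–Wang functional `F_h(E, F) = P(E) + (1/h) ∫_{E Δ F} d_F`. -/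
def ATW (h : ℝ) (E F : Set (Euc n)) : ℝ≥0∞ :=
  perimeter E + ENNReal.ofReal (1 / h) * ∫⁻ x in symmDiff E F, ENNReal.ofReal (bdist F x)

section AuxLemmas

open Convolution

lemma zero_mem_testVF : (fun _ : Euc n => (0 : Euc n)) ∈ testVF n := by
  refine ⟨contDiff_const, ?_, fun x => by simp⟩
  have : (Function.support fun _ : Euc n => (0 : Euc n)) = ∅ := by
    simp [Function.support]
  rw [HasCompactSupport, tsupport, this, closure_empty]
  exact isCompact_empty

lemma diverg_zero (x : Euc n) : diverg (fun _ : Euc n => (0 : Euc n)) x = 0 := by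
  simp [diverg, fderiv_const]

lemma ofReal_integral_le_perimeter {E : Set (Euc n)} {ξ : Euc n → Euc n}
    (hξ : ξ ∈ testVF n) :
    ENNReal.ofReal (∫ x in E, diverg ξ x) ≤ perimeter E := by
  exact le_iSup₂ (f := fun ξ _ => ENNReal.ofReal (∫ x in E, diverg ξ x)) ξ hξ

lemma integral_le_toReal_perimeter {E : Set (Euc n)} {ξ : Euc n → Euc n}
    (hξ : ξ ∈ testVF n) (hfin : perimeter E < ⊤) :
    ∫ x in E, diverg ξ x ≤ (perimeter E).toReal := by
  rcases le_or_gt (∫ x in E, diverg ξ x) 0 with h | h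
  · exact h.trans ENNReal.toReal_nonneg
  · have := ofReal_integral_le_perimeter (E := E) hξ
    have h2 := ENNReal.toReal_mono hfin.ne this
    rwa [ENNReal.toReal_ofReal h.le] at h2

lemma diverg_translate (ξ : Euc n → Euc n) (hξ : ContDiff ℝ 1 ξ) (y x : Euc n) :
    diverg (fun z => ξ (z + y)) x = diverg ξ (x + y) := by
  have hd : HasFDerivAt (fun z : Euc n => ξ (z + y)) (fderiv ℝ ξ (x + y)) x := by
    have h1 : HasFDerivAt ξ (fderiv ℝ ξ (x + y)) (x + y) :=
      (hξ.differentiable one_ne_zero (x + y)).hasFDerivAt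
    have h2 : HasFDerivAt (fun z : Euc n => z + y)
        (ContinuousLinearMap.id ℝ (Euc n)) x := (hasFDerivAt_id x).add_const y
    have := h1.comp x h2
    rw [ContinuousLinearMap.comp_id] at this
    exact this
  simp [diverg, hd.fderiv]

lemma translate_mem_testVF {ξ : Euc n → Euc n} (hξ : ξ ∈ testVF n) (y : Euc n) :
    (fun z => ξ (z + y)) ∈ testVF n := by
  obtain ⟨h1, h2, h3⟩ := hξ
  refine ⟨h1.comp (contDiff_id.add contDiff_const), ?_, fun x => h3 _⟩
  exact h2.comp_homeomorph (Homeomorph.addRight y)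


lemma clm_eval_eq_sum (L : Euc n →L[ℝ] ℝ) (v : Euc n) :
    L v = ∑ i, v i * L (EuclideanSpace.single i 1) := by
  have hv : v = ∑ i, v i • EuclideanSpace.single i (1:ℝ) := by
    have := (EuclideanSpace.basisFun (Fin n) ℝ).sum_repr v
    simp only [EuclideanSpace.basisFun_apply, EuclideanSpace.basisFun_repr] at this
    exact this.symm
  conv_lhs => rw [hv]
  rw [map_sum]
  exact Finset.sum_congr rfl fun i _ => by rw [_root_.map_smul]; simp [smul_eq_mul]

lemma continuous_diverg {ξ : Euc n → Euc n} (hξ : ContDiff ℝ 1 ξ) :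
    Continuous (diverg ξ) := by
  have h1 : Continuous (fderiv ℝ ξ) := hξ.continuous_fderiv one_ne_zero
  exact continuous_finset_sum _ fun i _ =>
    (continuous_apply i).comp ((PiLp.continuous_ofLp 2 _).comp (h1.clm_apply continuous_const))

lemma diverg_eq_zero_of_nmem_tsupport {ξ : Euc n → Euc n} {x : Euc n}
    (hx : x ∉ tsupport ξ) : diverg ξ x = 0 := by
  have hforall : ξ =ᶠ[nhds x] (fun _ => (0 : Euc n)) :=
    eventually_of_mem ((isOpen_compl_iff.2 (isClosed_tsupport ξ)).mem_nhds hx)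
      (fun y hy => image_eq_zero_of_notMem_tsupport hy)
  have hfz : fderiv ℝ ξ x = 0 := by
    rw [hforall.fderiv_eq, fderiv_fun_const]; rfl
  simp [diverg, hfz]

lemma pi_integral_diverg_eq_zero {k : ℕ} (w : (Fin (k+1) → ℝ) → (Fin (k+1) → ℝ))
    (hw : ContDiff ℝ 1 w) (hsupp : HasCompactSupport w) :
    ∫ x : Fin (k+1) → ℝ, ∑ i, fderiv ℝ w x (Pi.single i 1) i = 0 := by
  obtain ⟨R, hR0, hRsupp⟩ : ∃ R : ℝ, 0 < R ∧ tsupport w ⊆ Metric.ball 0 R := by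
    obtain ⟨R, hR⟩ := hsupp.isBounded.subset_ball 0
    exact ⟨max R 1, lt_of_lt_of_le one_pos (le_max_right _ _),
      hR.trans (Metric.ball_subset_ball (le_max_left _ _))⟩
  set a : Fin (k+1) → ℝ := fun _ => -R with ha
  set b : Fin (k+1) → ℝ := fun _ => R with hb
  have hle : a ≤ b := fun i => by simp only [ha, hb]; linarith
  have hwz : ∀ y : Fin (k+1) → ℝ, R ≤ ‖y‖ → w y = 0 := by
    intro y hy
    apply image_eq_zero_of_notMem_tsupport
    intro hmem
    have := hRsupp hmem
    rw [Metric.mem_ball, dist_zero_right] at this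
    linarith
  have hcont : Continuous fun x => ∑ i, fderiv ℝ w x (Pi.single i 1) i := by
    have h1 : Continuous (fderiv ℝ w) := hw.continuous_fderiv one_ne_zero
    exact continuous_finset_sum _ fun i _ =>
      (continuous_apply i).comp (h1.clm_apply continuous_const)
  have key := integral_divergence_of_hasFDerivAt_off_countable a b hle w
    (fun x => fderiv ℝ w x) ∅ countable_empty hw.continuous.continuousOn
    (fun x _ => (hw.differentiable one_ne_zero x).hasFDerivAt)
    (hcont.continuousOn.integrableOn_compact isCompact_Icc)
  have hzero : ∀ x ∉ Set.Icc a b, ∑ i, fderiv ℝ w x (Pi.single i 1) i = 0 := by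
    intro x hx
    have hnorm : R ≤ ‖x‖ := by
      by_contra hlt
      push_neg at hlt
      apply hx
      rw [Set.mem_Icc]
      constructor <;> intro i <;>
      · have h2 : |x i| ≤ ‖x‖ := by
          simpa [Real.norm_eq_abs] using norm_le_pi_norm x i
        have := abs_le.1 h2
        simp only [ha, hb]
        linarith [this.1, this.2]
    have hx' : x ∉ tsupport w := by
      intro h
      have := hRsupp h
      rw [Metric.mem_ball, dist_zero_right] at this
      linarith
    have hforall : w =ᶠ[nhds x] (fun _ => (0 : Fin (k+1) → ℝ)) :=
      eventually_of_mem ((isOpen_compl_iff.2 (isClosed_tsupport w)).mem_nhds hx')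
        (fun y hy => image_eq_zero_of_notMem_tsupport hy)
    have hfz : fderiv ℝ w x = 0 := by
      rw [hforall.fderiv_eq, fderiv_fun_const]
      rfl
    simp [hfz]
  rw [← setIntegral_eq_integral_of_forall_compl_eq_zero hzero, key]
  apply Finset.sum_eq_zero
  intro i _
  have h1 : ∀ x : Fin k → ℝ, w (Fin.insertNth (α := fun _ => ℝ) i (b i) x) i = 0 := by
    intro x
    have hle1 := norm_le_pi_norm (Fin.insertNth (α := fun _ => ℝ) i (b i) x) i
    rw [Fin.insertNth_apply_same] at hle1
    refine congrFun (hwz _ ?_) i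
    calc R = ‖b i‖ := by simp [hb, abs_of_pos hR0]
    _ ≤ _ := hle1
  have h2 : ∀ x : Fin k → ℝ, w (Fin.insertNth (α := fun _ => ℝ) i (a i) x) i = 0 := by
    intro x
    have hle1 := norm_le_pi_norm (Fin.insertNth (α := fun _ => ℝ) i (a i) x) i
    rw [Fin.insertNth_apply_same] at hle1
    refine congrFun (hwz _ ?_) i
    calc R = ‖a i‖ := by simp [ha, abs_of_pos hR0]
    _ ≤ _ := hle1
  simp only [h1, h2]
  simp

lemma integral_diverg_eq_zero (w : Euc n → Euc n) (hw : ContDiff ℝ 1 w)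
    (hsupp : HasCompactSupport w) : ∫ x, diverg w x = 0 := by
  cases n with
  | zero =>
    have : ∀ x : Euc 0, diverg w x = 0 := by
      intro x; simp [diverg]
    simp [this]
  | succ k =>
    set eL : Euc (k+1) ≃L[ℝ] (Fin (k+1) → ℝ) := EuclideanSpace.equiv (Fin (k+1)) ℝ with heL
    set w' : (Fin (k+1) → ℝ) → (Fin (k+1) → ℝ) := fun x => eL (w (eL.symm x)) with hw'
    have hw'c : ContDiff ℝ 1 w' :=
      (eL.toContinuousLinearMap.contDiff).comp (hw.comp eL.symm.toContinuousLinearMap.contDiff)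
    have hw's : HasCompactSupport w' := by
      have h1 : HasCompactSupport (w ∘ eL.symm.toHomeomorph) :=
        hsupp.comp_homeomorph eL.symm.toHomeomorph
      exact h1.comp_left (g := eL) (by simp)
    have hdiv : ∀ x : Euc (k+1),
        (∑ i, fderiv ℝ w' (eL x) (Pi.single i 1) i) = diverg w x := by
      intro x
      have h1 : HasFDerivAt w (fderiv ℝ w x) (eL.symm (eL x)) := by
        rw [eL.symm_apply_apply]; exact (hw.differentiable one_ne_zero x).hasFDerivAt
      have h2 : HasFDerivAt w'
          ((eL.toContinuousLinearMap).comp ((fderiv ℝ w x).comp eL.symm.toContinuousLinearMap))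
          (eL x) := (eL.hasFDerivAt).comp _ (h1.comp (eL x) (eL.symm.hasFDerivAt))
      rw [h2.fderiv]
      exact Finset.sum_congr rfl (fun i _ => rfl)
    have hmp : MeasurePreserving ((MeasurableEquiv.toLp 2 (Fin (k+1) → ℝ)).symm) volume volume :=
      EuclideanSpace.volume_preserving_symm_measurableEquiv_toLp _
    have hco : ∀ x : Euc (k+1),
        diverg w x = (fun y => ∑ i, fderiv ℝ w' y (Pi.single i 1) i)
          (((MeasurableEquiv.toLp 2 (Fin (k+1) → ℝ)).symm) x) :=
      fun x => (hdiv x).symm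
    calc ∫ x, diverg w x
        = ∫ x, (fun y => ∑ i, fderiv ℝ w' y (Pi.single i 1) i)
            (((MeasurableEquiv.toLp 2 (Fin (k+1) → ℝ)).symm) x) := by
          exact integral_congr_ae (Filter.Eventually.of_forall hco)
      _ = ∫ y : Fin (k+1) → ℝ, ∑ i, fderiv ℝ w' y (Pi.single i 1) i :=
          hmp.integral_comp ((MeasurableEquiv.toLp 2 (Fin (k+1) → ℝ)).symm).measurableEmbedding
            (fun y => ∑ i, fderiv ℝ w' y (Pi.single i 1) i)
      _ = 0 := pi_integral_diverg_eq_zero w' hw'c hw's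

-- extra lemma
lemma hasCompactSupport_diverg {ξ : Euc n → Euc n} (hξ : HasCompactSupport ξ) :
    HasCompactSupport (diverg ξ) :=
  HasCompactSupport.intro hξ fun _ hx => diverg_eq_zero_of_nmem_tsupport hx

lemma diverg_smul {m : Euc n → ℝ} {ξ : Euc n → Euc n} {x : Euc n}
    (hm : DifferentiableAt ℝ m x) (hξ : DifferentiableAt ℝ ξ x) :
    diverg (fun y => m y • ξ y) x = fderiv ℝ m x (ξ x) + m x * diverg ξ x := by
  have h := fderiv_fun_smul hm hξ
  simp only [diverg, h]
  rw [clm_eval_eq_sum (fderiv ℝ m x) (ξ x)]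
  rw [Finset.mul_sum, ← Finset.sum_add_distrib]
  apply Finset.sum_congr rfl
  intro i _
  simp only [ContinuousLinearMap.add_apply, ContinuousLinearMap.coe_smul',
    Pi.smul_apply, ContinuousLinearMap.smulRight_apply]
  simp [smul_eq_mul]
  ring

lemma integrable_fderiv_apply {m : Euc n → ℝ} {ξ : Euc n → Euc n}
    (hm : ContDiff ℝ 1 m) (hξ : ContDiff ℝ 1 ξ) (hsupp : HasCompactSupport ξ) :
    Integrable (fun x => fderiv ℝ m x (ξ x)) := by
  apply Continuous.integrable_of_hasCompactSupport
  · exact (hm.continuous_fderiv one_ne_zero).clm_apply hξ.continuous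
  · apply HasCompactSupport.intro hsupp
    intro x hx
    rw [image_eq_zero_of_notMem_tsupport hx]
    simp

lemma integrable_mul_diverg {m : Euc n → ℝ} {ξ : Euc n → Euc n}
    (hm : Continuous m) (hξ : ContDiff ℝ 1 ξ) (hsupp : HasCompactSupport ξ) :
    Integrable (fun x => m x * diverg ξ x) := by
  apply Continuous.integrable_of_hasCompactSupport
  · exact hm.mul (continuous_diverg hξ)
  · apply HasCompactSupport.intro hsupp
    intro x hx
    rw [diverg_eq_zero_of_nmem_tsupport hx, mul_zero]

/-- Integration by parts. -/

lemma integral_mul_diverg_eq_neg {m : Euc n → ℝ} {ξ : Euc n → Euc n}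
    (hm : ContDiff ℝ 1 m) (hξ : ContDiff ℝ 1 ξ) (hsupp : HasCompactSupport ξ) :
    ∫ x, m x * diverg ξ x = - ∫ x, fderiv ℝ m x (ξ x) := by
  have hw : ContDiff ℝ 1 (fun y => m y • ξ y) := hm.smul hξ
  have hws : HasCompactSupport (fun y => m y • ξ y) := by
    apply HasCompactSupport.intro hsupp
    intro x hx
    rw [image_eq_zero_of_notMem_tsupport hx, smul_zero]
  have h0 := integral_diverg_eq_zero _ hw hws
  have heq : ∀ x, diverg (fun y => m y • ξ y) x
      = fderiv ℝ m x (ξ x) + m x * diverg ξ x := fun x =>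
    diverg_smul (hm.differentiable one_ne_zero x) (hξ.differentiable one_ne_zero x)
  rw [integral_congr_ae (Eventually.of_forall heq)] at h0
  rw [integral_add (integrable_fderiv_apply hm hξ hsupp)
    (integrable_mul_diverg hm.continuous hξ hsupp)] at h0
  linarith

lemma integrable_diverg_testVF {ξ : Euc n → Euc n} (hξ : ξ ∈ testVF n) :
    Integrable (diverg ξ) := by
  apply Continuous.integrable_of_hasCompactSupport (continuous_diverg hξ.1)
  exact HasCompactSupport.intro hξ.2.1 fun x hx => diverg_eq_zero_of_nmem_tsupport hx

/-- The mollification bound: `∫ (ρ ⋆ χ_E) div ζ ≤ P(E)`. -/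

lemma integral_convolution_diverg_le {E : Set (Euc n)} (hE : MeasurableSet E)
    (hEfin : perimeter E < ⊤) (ρ : Euc n → ℝ) (hρc : Continuous ρ)
    (hρ0 : ∀ t, 0 ≤ ρ t) (hρi : Integrable ρ) (hρ1 : ∫ t, ρ t = 1)
    {ζ : Euc n → Euc n} (hζ : ζ ∈ testVF n) :
    ∫ x, (∫ t, ρ t * E.indicator (fun _ => (1:ℝ)) (x - t)) * diverg ζ x
      ≤ (perimeter E).toReal := by
  set χ : Euc n → ℝ := E.indicator (fun _ => (1:ℝ)) with hχ
  have hχm : Measurable χ := (measurable_const.indicator hE)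
  have hχ01 : ∀ y, 0 ≤ χ y ∧ χ y ≤ 1 := by
    intro y
    by_cases h : y ∈ E <;> simp [hχ, Set.indicator_of_mem, Set.indicator_of_notMem, h]
  -- the function on the product
  set F : Euc n → Euc n → ℝ := fun x t => ρ t * χ (x - t) * diverg ζ x with hF
  have hFmeas : AEStronglyMeasurable (Function.uncurry F)
      ((volume : Measure (Euc n)).prod volume) := by
    apply Measurable.aestronglyMeasurable
    apply Measurable.mul
    apply Measurable.mul
    · exact hρc.measurable.comp measurable_snd
    · exact hχm.comp (measurable_fst.sub measurable_snd)
    · exact (continuous_diverg hζ.1).measurable.comp measurable_fst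
  have hGint : Integrable (fun z : Euc n × Euc n => |diverg ζ z.1| * ρ z.2)
      ((volume : Measure (Euc n)).prod volume) :=
    Integrable.mul_prod (integrable_diverg_testVF hζ).abs hρi
  have hFint : Integrable (Function.uncurry F)
      ((volume : Measure (Euc n)).prod volume) := by
    apply hGint.mono' hFmeas
    apply Eventually.of_forall
    rintro ⟨x, t⟩
    simp only [Function.uncurry, hF, Real.norm_eq_abs, abs_mul]
    have h1 : |χ (x - t)| ≤ 1 := by
      rw [abs_of_nonneg (hχ01 _).1]; exact (hχ01 _).2
    have h2 : |ρ t| = ρ t := abs_of_nonneg (hρ0 t)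
    calc |ρ t| * |χ (x-t)| * |diverg ζ x| ≤ |ρ t| * 1 * |diverg ζ x| := by
          apply mul_le_mul_of_nonneg_right _ (abs_nonneg _)
          exact mul_le_mul_of_nonneg_left h1 (abs_nonneg _)
      _ = |diverg ζ x| * ρ t := by rw [h2]; ring
  -- swap
  have hswap : ∫ x, ∫ t, F x t = ∫ t, ∫ x, F x t :=
    integral_integral_swap hFint
  -- identify LHS
  have hL : ∀ x, (∫ t, ρ t * χ (x - t)) * diverg ζ x = ∫ t, F x t := by
    intro x
    rw [← integral_mul_const]
  -- inner integral bound
  have hinner : ∀ t, ∫ x, F x t ≤ ρ t * (perimeter E).toReal := by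
    intro t
    have h1 : ∀ x, F x t = ρ t * (χ (x - t) * diverg ζ x) := by
      intro x; simp only [hF]; ring
    rw [integral_congr_ae (Eventually.of_forall h1), integral_const_mul]
    apply mul_le_mul_of_nonneg_left _ (hρ0 t)
    -- change of variables
    have h2 : ∫ x, χ (x - t) * diverg ζ x = ∫ x, χ x * diverg ζ (x + t) := by
      rw [← integral_add_right_eq_self (fun x => χ (x - t) * diverg ζ x) t]
      simp
    rw [h2]
    have h3 : (fun x => χ x * diverg ζ (x + t))
        = E.indicator (fun x => diverg (fun z => ζ (z + t)) x) := by
      funext x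
      by_cases h : x ∈ E <;>
        simp [hχ, Set.indicator_of_mem, Set.indicator_of_notMem, h,
          diverg_translate ζ hζ.1 t x]
    rw [h3, integral_indicator hE]
    exact integral_le_toReal_perimeter (translate_mem_testVF hζ t) hEfin
  -- conclude
  have hmarg : Integrable (fun t => ∫ x, F x t) := by
    have := hFint.swap.integral_prod_left
    simpa using this
  calc ∫ x, (∫ t, ρ t * χ (x - t)) * diverg ζ x
      = ∫ x, ∫ t, F x t := by
        apply integral_congr_ae (Eventually.of_forall hL)
    _ = ∫ t, ∫ x, F x t := hswap
    _ ≤ ∫ t, ρ t * (perimeter E).toReal := by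
        apply integral_mono hmarg (hρi.mul_const _) hinner
    _ = (perimeter E).toReal := by rw [integral_mul_const, hρ1, one_mul]

lemma smooth_pair_ineq {u v : Euc n → ℝ} (hu : ContDiff ℝ 1 u) (hv : ContDiff ℝ 1 v)
    {a b δ : ℝ} (ha : 0 ≤ a) (hb : 0 ≤ b) (hδ : 0 < δ)
    (hubd : ∀ ζ ∈ testVF n, ∫ x, u x * diverg ζ x ≤ a)
    (hvbd : ∀ ζ ∈ testVF n, ∫ x, v x * diverg ζ x ≤ b)
    {ξ η : Euc n → Euc n} (hξ : ξ ∈ testVF n) (hη : η ∈ testVF n) :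
    (∫ x, (2:ℝ)⁻¹ • (u x + v x - Real.sqrt ((u x - v x) * (u x - v x) + δ * δ)) * diverg ξ x)
    + (∫ x, (2:ℝ)⁻¹ • (u x + v x + Real.sqrt ((u x - v x) * (u x - v x) + δ * δ)) * diverg η x)
    ≤ a + b := by
  set d : Euc n → ℝ := fun x => u x - v x with hd
  have hdc : ContDiff ℝ 1 d := hu.sub hv
  set q : Euc n → ℝ := fun x => Real.sqrt (d x * d x + δ * δ) with hq
  have hqpos : ∀ x, 0 < d x * d x + δ * δ := fun x => by nlinarith [mul_self_nonneg (d x)]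
  have hqc : ContDiff ℝ 1 q :=
    ((hdc.mul hdc).add contDiff_const).sqrt fun x => (hqpos x).ne'
  have hqval : ∀ x, 0 < q x := fun x => Real.sqrt_pos.2 (hqpos x)
  set c : Euc n → ℝ := fun x => d x / q x with hc
  have hcc : ContDiff ℝ 1 c := hdc.div hqc fun x => (hqval x).ne'
  have hcabs : ∀ x, |c x| ≤ 1 := by
    intro x
    rw [abs_div, div_le_one (by rw [abs_of_pos (hqval x)]; exact hqval x)]
    rw [abs_of_pos (hqval x)]
    calc |d x| = Real.sqrt (d x * d x) := (Real.sqrt_mul_self_eq_abs _).symm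
    _ ≤ q x := Real.sqrt_le_sqrt (by nlinarith)
  set α : Euc n → ℝ := fun x => (1 - c x)/2 with hα
  set β : Euc n → ℝ := fun x => (1 + c x)/2 with hβ
  have hαc : ContDiff ℝ 1 α := (contDiff_const.sub hcc).div_const 2
  have hβc : ContDiff ℝ 1 β := (contDiff_const.add hcc).div_const 2
  have hα01 : ∀ x, 0 ≤ α x ∧ α x ≤ 1 := by
    intro x
    have h := abs_le.1 (hcabs x)
    constructor
    · show (0:ℝ) ≤ (1 - c x)/2; linarith [h.1, h.2]
    · show (1 - c x)/2 ≤ (1:ℝ); linarith [h.1, h.2]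
  have hβ01 : ∀ x, 0 ≤ β x ∧ β x ≤ 1 := by
    intro x
    have h := abs_le.1 (hcabs x)
    constructor
    · show (0:ℝ) ≤ (1 + c x)/2; linarith [h.1, h.2]
    · show (1 + c x)/2 ≤ (1:ℝ); linarith [h.1, h.2]
  have hαβ : ∀ x, α x + β x = 1 := fun x => by
    show (1 - c x)/2 + (1 + c x)/2 = 1; ring
  -- derivative of q
  have hqderiv : ∀ x, HasFDerivAt q (c x • (fderiv ℝ u x - fderiv ℝ v x)) x := by
    intro x
    have hder : HasFDerivAt d (fderiv ℝ u x - fderiv ℝ v x) x := by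
      have h1 := ((hu.differentiable one_ne_zero) x).hasFDerivAt
      have h2 := ((hv.differentiable one_ne_zero) x).hasFDerivAt
      exact h1.sub h2
    have hw : HasFDerivAt (fun y => d y * d y + δ * δ)
        (d x • (fderiv ℝ u x - fderiv ℝ v x) + d x • (fderiv ℝ u x - fderiv ℝ v x)) x :=
      (hder.mul hder).add_const (δ * δ)
    have hsq : HasDerivAt Real.sqrt (1 / (2 * Real.sqrt (d x * d x + δ * δ))) (d x * d x + δ * δ) :=
      Real.hasDerivAt_sqrt (hqpos x).ne'
    have hcomp := hsq.comp_hasFDerivAt x hw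
    refine hcomp.congr_fderiv ?_
    symm
    ext w
    simp only [ContinuousLinearMap.coe_smul', Pi.smul_apply, ContinuousLinearMap.add_apply,
      ContinuousLinearMap.coe_sub', Pi.sub_apply, smul_eq_mul]
    show c x * (fderiv ℝ u x w - fderiv ℝ v x w)
        = 1 / (2 * Real.sqrt (d x * d x + δ * δ)) *
          (d x * (fderiv ℝ u x w - fderiv ℝ v x w) + d x * (fderiv ℝ u x w - fderiv ℝ v x w))
    have hqx : q x = Real.sqrt (d x * d x + δ * δ) := rfl
    have hcx : c x = d x / q x := rfl
    rw [hcx, hqx]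
    have hne : Real.sqrt (d x * d x + δ * δ) ≠ 0 := by
      rw [← hqx]; exact (hqval x).ne'
    field_simp
    ring
  -- derivative of m and M
  have hmderiv : ∀ x, HasFDerivAt (fun y => (2:ℝ)⁻¹ • (u y + v y - q y))
      (α x • fderiv ℝ u x + β x • fderiv ℝ v x) x := by
    intro x
    have h1 := ((hu.differentiable one_ne_zero) x).hasFDerivAt
    have h2 := ((hv.differentiable one_ne_zero) x).hasFDerivAt
    have h3 := ((h1.add h2).sub (hqderiv x)).const_smul (2:ℝ)⁻¹
    refine h3.congr_fderiv ?_
    symm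
    ext w
    simp only [ContinuousLinearMap.add_apply, ContinuousLinearMap.coe_smul', Pi.smul_apply,
      ContinuousLinearMap.coe_sub', Pi.sub_apply, smul_eq_mul]
    show α x * _ + β x * _ = _
    rw [show α x = (1 - c x)/2 from rfl, show β x = (1 + c x)/2 from rfl]
    ring
  have hMderiv : ∀ x, HasFDerivAt (fun y => (2:ℝ)⁻¹ • (u y + v y + q y))
      (β x • fderiv ℝ u x + α x • fderiv ℝ v x) x := by
    intro x
    have h1 := ((hu.differentiable one_ne_zero) x).hasFDerivAt
    have h2 := ((hv.differentiable one_ne_zero) x).hasFDerivAt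
    have h3 := ((h1.add h2).add (hqderiv x)).const_smul (2:ℝ)⁻¹
    refine h3.congr_fderiv ?_
    symm
    ext w
    simp only [ContinuousLinearMap.add_apply, ContinuousLinearMap.coe_smul', Pi.smul_apply,
      ContinuousLinearMap.coe_add', ContinuousLinearMap.coe_sub', Pi.add_apply, Pi.sub_apply,
      smul_eq_mul]
    show β x * _ + α x * _ = _
    rw [show α x = (1 - c x)/2 from rfl, show β x = (1 + c x)/2 from rfl]
    ring
  have hmc : ContDiff ℝ 1 (fun y => (2:ℝ)⁻¹ • (u y + v y - q y)) :=
    ((hu.add hv).sub hqc).const_smul ((2:ℝ)⁻¹)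
  have hMc : ContDiff ℝ 1 (fun y => (2:ℝ)⁻¹ • (u y + v y + q y)) :=
    ((hu.add hv).add hqc).const_smul ((2:ℝ)⁻¹)
  -- the combined vector fields
  set ζ₁ : Euc n → Euc n := fun x => α x • ξ x + β x • η x with hζ₁
  set ζ₂ : Euc n → Euc n := fun x => β x • ξ x + α x • η x with hζ₂
  have hcombo : ∀ (p r : Euc n → ℝ), ContDiff ℝ 1 p → ContDiff ℝ 1 r →
      (∀ x, 0 ≤ p x) → (∀ x, 0 ≤ r x) → (∀ x, p x + r x = 1) →
      (fun x => p x • ξ x + r x • η x) ∈ testVF n := by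
    intro p r hp hr hp0 hr0 hpr
    refine ⟨(hp.smul hξ.1).add (hr.smul hη.1), ?_, ?_⟩
    · exact ((hξ.2.1.smul_left (f := p)).add (hη.2.1.smul_left (f := r)))
    · intro x
      calc ‖p x • ξ x + r x • η x‖ ≤ ‖p x • ξ x‖ + ‖r x • η x‖ := norm_add_le _ _
      _ = |p x| * ‖ξ x‖ + |r x| * ‖η x‖ := by rw [norm_smul, norm_smul]; simp [Real.norm_eq_abs]
      _ ≤ p x * 1 + r x * 1 := by
          apply add_le_add
          · rw [abs_of_nonneg (hp0 x)]
            exact mul_le_mul_of_nonneg_left (hξ.2.2 x) (hp0 x)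
          · rw [abs_of_nonneg (hr0 x)]
            exact mul_le_mul_of_nonneg_left (hη.2.2 x) (hr0 x)
      _ = 1 := by rw [mul_one, mul_one, hpr]
  have hζ₁t : ζ₁ ∈ testVF n :=
    hcombo α β hαc hβc (fun x => (hα01 x).1) (fun x => (hβ01 x).1) hαβ
  have hζ₂t : ζ₂ ∈ testVF n :=
    hcombo β α hβc hαc (fun x => (hβ01 x).1) (fun x => (hα01 x).1)
      (fun x => by rw [add_comm]; exact hαβ x)
  -- integration by parts
  have hpart1 : ∫ x, (2:ℝ)⁻¹ • (u x + v x - q x) * diverg ξ x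
      = - ∫ x, fderiv ℝ (fun y => (2:ℝ)⁻¹ • (u y + v y - q y)) x (ξ x) :=
    integral_mul_diverg_eq_neg hmc hξ.1 hξ.2.1
  have hpart2 : ∫ x, (2:ℝ)⁻¹ • (u x + v x + q x) * diverg η x
      = - ∫ x, fderiv ℝ (fun y => (2:ℝ)⁻¹ • (u y + v y + q y)) x (η x) :=
    integral_mul_diverg_eq_neg hMc hη.1 hη.2.1
  have hpart3 : ∫ x, u x * diverg ζ₁ x = - ∫ x, fderiv ℝ u x (ζ₁ x) :=
    integral_mul_diverg_eq_neg hu hζ₁t.1 hζ₁t.2.1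
  have hpart4 : ∫ x, v x * diverg ζ₂ x = - ∫ x, fderiv ℝ v x (ζ₂ x) :=
    integral_mul_diverg_eq_neg hv hζ₂t.1 hζ₂t.2.1
  -- pointwise identity
  have hptwise : ∀ x, fderiv ℝ (fun y => (2:ℝ)⁻¹ • (u y + v y - q y)) x (ξ x)
      + fderiv ℝ (fun y => (2:ℝ)⁻¹ • (u y + v y + q y)) x (η x)
      = fderiv ℝ u x (ζ₁ x) + fderiv ℝ v x (ζ₂ x) := by
    intro x
    rw [(hmderiv x).fderiv, (hMderiv x).fderiv]
    simp only [ContinuousLinearMap.add_apply, ContinuousLinearMap.coe_smul', Pi.smul_apply,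
      smul_eq_mul, map_add, _root_.map_smul]
    show α x * _ + β x * _ + (β x * _ + α x * _) = _
    rw [show ζ₁ x = α x • ξ x + β x • η x from rfl, show ζ₂ x = β x • ξ x + α x • η x from rfl]
    rw [map_add, map_add, _root_.map_smul, _root_.map_smul, _root_.map_smul, _root_.map_smul]
    simp only [smul_eq_mul]
    ring
  -- integrability
  have hint1 := integrable_fderiv_apply hmc hξ.1 hξ.2.1
  have hint2 := integrable_fderiv_apply hMc hη.1 hη.2.1
  have hint3 := integrable_fderiv_apply hu hζ₁t.1 hζ₁t.2.1
  have hint4 := integrable_fderiv_apply hv hζ₂t.1 hζ₂t.2.1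
  have hsum : (∫ x, fderiv ℝ (fun y => (2:ℝ)⁻¹ • (u y + v y - q y)) x (ξ x))
      + (∫ x, fderiv ℝ (fun y => (2:ℝ)⁻¹ • (u y + v y + q y)) x (η x))
      = (∫ x, fderiv ℝ u x (ζ₁ x)) + (∫ x, fderiv ℝ v x (ζ₂ x)) := by
    rw [← integral_add hint1 hint2, ← integral_add hint3 hint4]
    exact integral_congr_ae (Eventually.of_forall hptwise)
  have h5 := hubd ζ₁ hζ₁t
  have h6 := hvbd ζ₂ hζ₂t
  have goal_eq : (∫ x, (2:ℝ)⁻¹ • (u x + v x - q x) * diverg ξ x)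
      + (∫ x, (2:ℝ)⁻¹ • (u x + v x + q x) * diverg η x)
      = (∫ x, u x * diverg ζ₁ x) + (∫ x, v x * diverg ζ₂ x) := by
    rw [hpart1, hpart2, hpart3, hpart4]
    rw [← neg_add, ← neg_add, hsum]
  calc (∫ x, (2:ℝ)⁻¹ • (u x + v x - Real.sqrt ((u x - v x) * (u x - v x) + δ * δ)) * diverg ξ x)
      + (∫ x, (2:ℝ)⁻¹ • (u x + v x + Real.sqrt ((u x - v x) * (u x - v x) + δ * δ)) * diverg η x)
      = (∫ x, u x * diverg ζ₁ x) + (∫ x, v x * diverg ζ₂ x) := goal_eq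
    _ ≤ a + b := add_le_add h5 h6

lemma locallyIntegrable_indicator {E : Set (Euc n)} (hE : MeasurableSet E) :
    LocallyIntegrable (E.indicator (fun _ => (1:ℝ))) volume := by
  intro x
  refine ⟨Metric.ball x 1, Metric.ball_mem_nhds x one_pos, ?_⟩
  apply Measure.integrableOn_of_bounded (M := 1)
  · exact (measure_ball_lt_top).ne
  · exact (measurable_const.indicator hE).aestronglyMeasurable
  · apply Eventually.of_forall
    intro y
    by_cases h : y ∈ E <;> simp [Set.indicator_of_mem, Set.indicator_of_notMem, h]

lemma conv_indicator_contDiff {E : Set (Euc n)} (hE : MeasurableSet E)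
    (φ : ContDiffBump (0 : Euc n)) :
    ContDiff ℝ 1 ((φ.normed volume) ⋆[ContinuousLinearMap.lsmul ℝ ℝ, volume]
      (E.indicator (fun _ => (1:ℝ)))) :=
  HasCompactSupport.contDiff_convolution_left _ φ.hasCompactSupport_normed
    φ.contDiff_normed (locallyIntegrable_indicator hE)

lemma conv_indicator_eq {E : Set (Euc n)} (φ : ContDiffBump (0 : Euc n)) (x : Euc n) :
    ((φ.normed volume) ⋆[ContinuousLinearMap.lsmul ℝ ℝ, volume]
      (E.indicator (fun _ => (1:ℝ)))) x
    = ∫ t, φ.normed volume t * E.indicator (fun _ => (1:ℝ)) (x - t) := by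
  simp [convolution_def, ContinuousLinearMap.lsmul_apply, smul_eq_mul]

lemma conv_indicator_mem_Icc {E : Set (Euc n)} (hE : MeasurableSet E)
    (φ : ContDiffBump (0 : Euc n)) (x : Euc n) :
    ((φ.normed volume) ⋆[ContinuousLinearMap.lsmul ℝ ℝ, volume]
      (E.indicator (fun _ => (1:ℝ)))) x ∈ Set.Icc (0:ℝ) 1 := by
  rw [conv_indicator_eq]
  have hint : Integrable (fun t => φ.normed volume t * E.indicator (fun _ => (1:ℝ)) (x - t)) := by
    apply (φ.integrable_normed).mono'
    · apply AEStronglyMeasurable.mul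
      · exact (φ.contDiff_normed (n := 1)).continuous.aestronglyMeasurable
      · exact ((measurable_const.indicator hE).comp
          (measurable_id.const_sub x)).aestronglyMeasurable
    · apply Eventually.of_forall
      intro t
      rw [Real.norm_eq_abs, abs_mul, abs_of_nonneg (φ.nonneg_normed t)]
      by_cases h : x - t ∈ E <;>
        simp [Set.indicator_of_mem, Set.indicator_of_notMem, h, φ.nonneg_normed t]
  constructor
  · apply integral_nonneg
    intro t
    by_cases h : x - t ∈ E <;>
      simp [Set.indicator_of_mem, Set.indicator_of_notMem, h, φ.nonneg_normed t]
  · calc ∫ t, φ.normed volume t * E.indicator (fun _ => (1:ℝ)) (x - t)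
        ≤ ∫ t, φ.normed volume t := by
          apply integral_mono hint φ.integrable_normed
          intro t
          by_cases h : x - t ∈ E <;>
            simp [Set.indicator_of_mem, Set.indicator_of_notMem, h, φ.nonneg_normed t]
    _ = 1 := φ.integral_normed

lemma abs_smooth_min_sub (p q δ : ℝ) (hδ : 0 < δ) :
    |(2:ℝ)⁻¹ • (p + q - Real.sqrt ((p - q) * (p - q) + δ * δ)) - min p q| ≤ δ/2 ∧
    |(2:ℝ)⁻¹ • (p + q + Real.sqrt ((p - q) * (p - q) + δ * δ)) - max p q| ≤ δ/2 := by
  set d := p - q with hd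
  have h1 : Real.sqrt (d * d) = |d| := Real.sqrt_mul_self_eq_abs d
  have h2 : |d| ≤ Real.sqrt (d * d + δ * δ) := by
    rw [← h1]; exact Real.sqrt_le_sqrt (by nlinarith)
  have h3 : Real.sqrt (d * d + δ * δ) ≤ |d| + δ := by
    have : Real.sqrt ((|d| + δ) * (|d| + δ)) = |d| + δ := by
      rw [Real.sqrt_mul_self_eq_abs, abs_of_nonneg (by positivity)]
    rw [← this]
    apply Real.sqrt_le_sqrt
    nlinarith [abs_nonneg d, sq_abs d]
  have hmin : min p q = (p + q - |d|)/2 := by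
    rcases le_total p q with h | h
    · rw [min_eq_left h, abs_of_nonpos (by rw [hd]; linarith)]; ring
    · rw [min_eq_right h, abs_of_nonneg (by rw [hd]; linarith)]; ring
  have hmax : max p q = (p + q + |d|)/2 := by
    rcases le_total p q with h | h
    · rw [max_eq_right h, abs_of_nonpos (by rw [hd]; linarith)]; ring
    · rw [max_eq_left h, abs_of_nonneg (by rw [hd]; linarith)]; ring
  constructor
  · rw [hmin, smul_eq_mul]
    rw [abs_le]
    constructor <;> nlinarith
  · rw [hmax, smul_eq_mul]
    rw [abs_le]
    constructor <;> nlinarith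

lemma key_ineq {E G : Set (Euc n)} (hE : MeasurableSet E) (hG : MeasurableSet G)
    (hEfin : perimeter E < ⊤) (hGfin : perimeter G < ⊤)
    {ξ η : Euc n → Euc n} (hξ : ξ ∈ testVF n) (hη : η ∈ testVF n) :
    (∫ x in E ∩ G, diverg ξ x) + (∫ x in E ∪ G, diverg η x)
      ≤ (perimeter E).toReal + (perimeter G).toReal := by
  set χE : Euc n → ℝ := E.indicator (fun _ => (1:ℝ)) with hχE
  set χG : Euc n → ℝ := G.indicator (fun _ => (1:ℝ)) with hχG
  -- bump sequence
  set φ : ℕ → ContDiffBump (0 : Euc n) := fun k =>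
    ⟨1/((k:ℝ)+1), 2 * (1/((k:ℝ)+1)), by positivity, by
      have : 0 < 1/((k:ℝ)+1) := by positivity
      linarith⟩ with hφdef
  set u : ℕ → Euc n → ℝ := fun k =>
    (φ k).normed volume ⋆[ContinuousLinearMap.lsmul ℝ ℝ, volume] χE with hu
  set v : ℕ → Euc n → ℝ := fun k =>
    (φ k).normed volume ⋆[ContinuousLinearMap.lsmul ℝ ℝ, volume] χG with hv
  -- a.e. convergence
  have hφout : Tendsto (fun k => (φ k).rOut) atTop (𝓝 0) := by
    have h0 := tendsto_one_div_add_atTop_nhds_zero_nat.const_mul (2:ℝ)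
    simpa [φ] using h0
  have hφratio : ∀ᶠ k in atTop, (φ k).rOut ≤ 2 * (φ k).rIn :=
    Eventually.of_forall fun k => le_of_eq rfl
  have haeu : ∀ᵐ x, Tendsto (fun k => u k x) atTop (𝓝 (χE x)) :=
    ContDiffBump.ae_convolution_tendsto_right_of_locallyIntegrable hφout hφratio
      (locallyIntegrable_indicator hE)
  have haev : ∀ᵐ x, Tendsto (fun k => v k x) atTop (𝓝 (χG x)) :=
    ContDiffBump.ae_convolution_tendsto_right_of_locallyIntegrable hφout hφratio
      (locallyIntegrable_indicator hG)
  -- uniform bound on each u k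
  have hu01 : ∀ k x, u k x ∈ Set.Icc (0:ℝ) 1 := fun k x => conv_indicator_mem_Icc hE _ x
  have hv01 : ∀ k x, v k x ∈ Set.Icc (0:ℝ) 1 := fun k x => conv_indicator_mem_Icc hG _ x
  have huc : ∀ k, ContDiff ℝ 1 (u k) := fun k => conv_indicator_contDiff hE _
  have hvc : ∀ k, ContDiff ℝ 1 (v k) := fun k => conv_indicator_contDiff hG _
  have hubd : ∀ k, ∀ ζ ∈ testVF n, ∫ x, u k x * diverg ζ x ≤ (perimeter E).toReal := by
    intro k ζ hζ
    have := integral_convolution_diverg_le hE hEfin ((φ k).normed volume)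
      ((φ k).contDiff_normed (n := 1)).continuous (φ k).nonneg_normed
      (φ k).integrable_normed (φ k).integral_normed hζ
    calc ∫ x, u k x * diverg ζ x
        = ∫ x, (∫ t, (φ k).normed volume t * χE (x - t)) * diverg ζ x := by
          refine integral_congr_ae (Eventually.of_forall fun x => ?_)
          have hcv : u k x = ∫ t, (φ k).normed volume t * χE (x - t) :=
            conv_indicator_eq (φ k) x
          simp only []
          rw [hcv]
      _ ≤ _ := this
  have hvbd : ∀ k, ∀ ζ ∈ testVF n, ∫ x, v k x * diverg ζ x ≤ (perimeter G).toReal := by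
    intro k ζ hζ
    have := integral_convolution_diverg_le hG hGfin ((φ k).normed volume)
      ((φ k).contDiff_normed (n := 1)).continuous (φ k).nonneg_normed
      (φ k).integrable_normed (φ k).integral_normed hζ
    calc ∫ x, v k x * diverg ζ x
        = ∫ x, (∫ t, (φ k).normed volume t * χG (x - t)) * diverg ζ x := by
          refine integral_congr_ae (Eventually.of_forall fun x => ?_)
          have hcv : v k x = ∫ t, (φ k).normed volume t * χG (x - t) :=
            conv_indicator_eq (φ k) x
          simp only []
          rw [hcv]
      _ ≤ _ := this
  -- step B : inequality for min/max at each k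
  have hstepB : ∀ k, (∫ x, min (u k x) (v k x) * diverg ξ x)
      + (∫ x, max (u k x) (v k x) * diverg η x)
      ≤ (perimeter E).toReal + (perimeter G).toReal := by
    intro k
    set Cξ : ℝ := ∫ x, |diverg ξ x| with hCξ
    set Cη : ℝ := ∫ x, |diverg η x| with hCη
    have hCξ0 : 0 ≤ Cξ := integral_nonneg fun x => abs_nonneg _
    have hCη0 : 0 ≤ Cη := integral_nonneg fun x => abs_nonneg _
    -- suffices to show for every ε > 0
    apply _root_.le_of_forall_pos_le_add
    intro ε hε
    set δ : ℝ := ε / (Cξ + Cη + 1) with hδdef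
    have hδ : 0 < δ := by positivity
    have hsm := smooth_pair_ineq (huc k) (hvc k) ENNReal.toReal_nonneg ENNReal.toReal_nonneg hδ
      (hubd k) (hvbd k) hξ hη
    -- compare min with smooth min
    have hmincomp : (∫ x, min (u k x) (v k x) * diverg ξ x)
        ≤ (∫ x, (2:ℝ)⁻¹ • (u k x + v k x
            - Real.sqrt ((u k x - v k x) * (u k x - v k x) + δ * δ)) * diverg ξ x)
          + δ/2 * Cξ := by
      have hint1 : Integrable (fun x => min (u k x) (v k x) * diverg ξ x) := by
        apply Continuous.integrable_of_hasCompactSupport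
        · exact ((huc k).continuous.min (hvc k).continuous).mul (continuous_diverg hξ.1)
        · exact (hasCompactSupport_diverg hξ.2.1).mul_left
      have hint2 : Integrable (fun x => (2:ℝ)⁻¹ • (u k x + v k x
          - Real.sqrt ((u k x - v k x) * (u k x - v k x) + δ * δ)) * diverg ξ x) := by
        apply Continuous.integrable_of_hasCompactSupport
        · apply Continuous.mul _ (continuous_diverg hξ.1)
          apply Continuous.fun_const_smul
          apply Continuous.sub ((huc k).continuous.add (hvc k).continuous)
          apply Continuous.sqrt
          have := ((huc k).continuous.sub (hvc k).continuous)
          exact (this.mul this).add continuous_const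
        · exact (hasCompactSupport_diverg hξ.2.1).mul_left
      have hdiff : (∫ x, min (u k x) (v k x) * diverg ξ x)
          - (∫ x, (2:ℝ)⁻¹ • (u k x + v k x
            - Real.sqrt ((u k x - v k x) * (u k x - v k x) + δ * δ)) * diverg ξ x)
          ≤ δ/2 * Cξ := by
        rw [← integral_sub hint1 hint2]
        have hb : ∀ x, min (u k x) (v k x) * diverg ξ x
            - (2:ℝ)⁻¹ • (u k x + v k x
              - Real.sqrt ((u k x - v k x) * (u k x - v k x) + δ * δ)) * diverg ξ x
            ≤ δ/2 * |diverg ξ x| := by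
          intro x
          have h1 := (abs_smooth_min_sub (u k x) (v k x) δ hδ).1
          calc min (u k x) (v k x) * diverg ξ x
              - (2:ℝ)⁻¹ • (u k x + v k x
                - Real.sqrt ((u k x - v k x) * (u k x - v k x) + δ * δ)) * diverg ξ x
              = (min (u k x) (v k x)
                - (2:ℝ)⁻¹ • (u k x + v k x
                  - Real.sqrt ((u k x - v k x) * (u k x - v k x) + δ * δ))) * diverg ξ x := by
                ring
            _ ≤ |(min (u k x) (v k x)
                - (2:ℝ)⁻¹ • (u k x + v k x
                  - Real.sqrt ((u k x - v k x) * (u k x - v k x) + δ * δ))) * diverg ξ x| :=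
                le_abs_self _
            _ = |min (u k x) (v k x)
                - (2:ℝ)⁻¹ • (u k x + v k x
                  - Real.sqrt ((u k x - v k x) * (u k x - v k x) + δ * δ))| * |diverg ξ x| :=
                abs_mul _ _
            _ ≤ δ/2 * |diverg ξ x| := by
                apply mul_le_mul_of_nonneg_right _ (abs_nonneg _)
                rw [abs_sub_comm]
                exact h1
        calc ∫ x, (min (u k x) (v k x) * diverg ξ x
            - (2:ℝ)⁻¹ • (u k x + v k x
              - Real.sqrt ((u k x - v k x) * (u k x - v k x) + δ * δ)) * diverg ξ x)
            ≤ ∫ x, δ/2 * |diverg ξ x| := by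
              apply integral_mono (hint1.sub hint2)
                (((integrable_diverg_testVF hξ).abs).const_mul _) hb
          _ = δ/2 * Cξ := by rw [integral_const_mul]
      linarith
    -- compare max with smooth max
    have hmaxcomp : (∫ x, max (u k x) (v k x) * diverg η x)
        ≤ (∫ x, (2:ℝ)⁻¹ • (u k x + v k x
            + Real.sqrt ((u k x - v k x) * (u k x - v k x) + δ * δ)) * diverg η x)
          + δ/2 * Cη := by
      have hint1 : Integrable (fun x => max (u k x) (v k x) * diverg η x) := by
        apply Continuous.integrable_of_hasCompactSupport
        · exact ((huc k).continuous.max (hvc k).continuous).mul (continuous_diverg hη.1)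
        · exact (hasCompactSupport_diverg hη.2.1).mul_left
      have hint2 : Integrable (fun x => (2:ℝ)⁻¹ • (u k x + v k x
          + Real.sqrt ((u k x - v k x) * (u k x - v k x) + δ * δ)) * diverg η x) := by
        apply Continuous.integrable_of_hasCompactSupport
        · apply Continuous.mul _ (continuous_diverg hη.1)
          apply Continuous.fun_const_smul
          apply Continuous.add ((huc k).continuous.add (hvc k).continuous)
          apply Continuous.sqrt
          have := ((huc k).continuous.sub (hvc k).continuous)
          exact (this.mul this).add continuous_const
        · exact (hasCompactSupport_diverg hη.2.1).mul_left
      have hdiff : (∫ x, max (u k x) (v k x) * diverg η x)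
          - (∫ x, (2:ℝ)⁻¹ • (u k x + v k x
            + Real.sqrt ((u k x - v k x) * (u k x - v k x) + δ * δ)) * diverg η x)
          ≤ δ/2 * Cη := by
        rw [← integral_sub hint1 hint2]
        have hb : ∀ x, max (u k x) (v k x) * diverg η x
            - (2:ℝ)⁻¹ • (u k x + v k x
              + Real.sqrt ((u k x - v k x) * (u k x - v k x) + δ * δ)) * diverg η x
            ≤ δ/2 * |diverg η x| := by
          intro x
          have h1 := (abs_smooth_min_sub (u k x) (v k x) δ hδ).2
          calc max (u k x) (v k x) * diverg η x
              - (2:ℝ)⁻¹ • (u k x + v k x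
                + Real.sqrt ((u k x - v k x) * (u k x - v k x) + δ * δ)) * diverg η x
              = (max (u k x) (v k x)
                - (2:ℝ)⁻¹ • (u k x + v k x
                  + Real.sqrt ((u k x - v k x) * (u k x - v k x) + δ * δ))) * diverg η x := by
                ring
            _ ≤ |(max (u k x) (v k x)
                - (2:ℝ)⁻¹ • (u k x + v k x
                  + Real.sqrt ((u k x - v k x) * (u k x - v k x) + δ * δ))) * diverg η x| :=
                le_abs_self _
            _ = |max (u k x) (v k x)
                - (2:ℝ)⁻¹ • (u k x + v k x
                  + Real.sqrt ((u k x - v k x) * (u k x - v k x) + δ * δ))| * |diverg η x| :=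
                abs_mul _ _
            _ ≤ δ/2 * |diverg η x| := by
                apply mul_le_mul_of_nonneg_right _ (abs_nonneg _)
                rw [abs_sub_comm]
                exact h1
        calc ∫ x, (max (u k x) (v k x) * diverg η x
            - (2:ℝ)⁻¹ • (u k x + v k x
              + Real.sqrt ((u k x - v k x) * (u k x - v k x) + δ * δ)) * diverg η x)
            ≤ ∫ x, δ/2 * |diverg η x| := by
              apply integral_mono (hint1.sub hint2)
                (((integrable_diverg_testVF hη).abs).const_mul _) hb
          _ = δ/2 * Cη := by rw [integral_const_mul]
      linarith
    have hfinal : δ/2 * Cξ + δ/2 * Cη ≤ ε := by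
      have h2 : δ * (Cξ + Cη + 1) = ε := by
        rw [hδdef]; field_simp
      nlinarith [mul_nonneg hδ.le hCξ0, mul_nonneg hδ.le hCη0, hδ.le]
    calc (∫ x, min (u k x) (v k x) * diverg ξ x)
        + (∫ x, max (u k x) (v k x) * diverg η x)
        ≤ ((∫ x, (2:ℝ)⁻¹ • (u k x + v k x
            - Real.sqrt ((u k x - v k x) * (u k x - v k x) + δ * δ)) * diverg ξ x)
          + (∫ x, (2:ℝ)⁻¹ • (u k x + v k x
            + Real.sqrt ((u k x - v k x) * (u k x - v k x) + δ * δ)) * diverg η x))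
          + (δ/2 * Cξ + δ/2 * Cη) := by linarith
      _ ≤ ((perimeter E).toReal + (perimeter G).toReal) + ε := by
          apply add_le_add hsm hfinal
  -- step C : pass to the limit k → ∞
  have hlim1 : Tendsto (fun k => ∫ x, min (u k x) (v k x) * diverg ξ x) atTop
      (𝓝 (∫ x in E ∩ G, diverg ξ x)) := by
    have hgoal : (∫ x in E ∩ G, diverg ξ x)
        = ∫ x, (E ∩ G).indicator (diverg ξ) x := (integral_indicator (hE.inter hG)).symm
    rw [hgoal]
    apply tendsto_integral_of_dominated_convergence (fun x => |diverg ξ x|)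
    · intro k
      exact (((huc k).continuous.min (hvc k).continuous).mul
        (continuous_diverg hξ.1)).aestronglyMeasurable
    · exact (integrable_diverg_testVF hξ).abs
    · intro k
      apply Eventually.of_forall
      intro x
      rw [Real.norm_eq_abs, abs_mul]
      have h1 : |min (u k x) (v k x)| ≤ 1 := by
        rw [abs_le]
        constructor
        · have := (hu01 k x).1; have := (hv01 k x).1
          simp only [le_min_iff]
          constructor <;> linarith
        · have := (hu01 k x).2; have := (hv01 k x).2
          simp only [min_le_iff]
          left; linarith
      calc |min (u k x) (v k x)| * |diverg ξ x| ≤ 1 * |diverg ξ x| :=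
            mul_le_mul_of_nonneg_right h1 (abs_nonneg _)
        _ = |diverg ξ x| := one_mul _
    · filter_upwards [haeu, haev] with x hx1 hx2
      have hmin : Tendsto (fun k => min (u k x) (v k x)) atTop (𝓝 (min (χE x) (χG x))) :=
        hx1.min hx2
      have heq : (E ∩ G).indicator (diverg ξ) x = min (χE x) (χG x) * diverg ξ x := by
        by_cases h1 : x ∈ E <;> by_cases h2 : x ∈ G <;>
          simp [hχE, hχG, Set.indicator_of_mem, Set.indicator_of_notMem, h1, h2,
            Set.mem_inter_iff]
      rw [heq]
      exact hmin.mul tendsto_const_nhds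
  have hlim2 : Tendsto (fun k => ∫ x, max (u k x) (v k x) * diverg η x) atTop
      (𝓝 (∫ x in E ∪ G, diverg η x)) := by
    have hgoal : (∫ x in E ∪ G, diverg η x)
        = ∫ x, (E ∪ G).indicator (diverg η) x := (integral_indicator (hE.union hG)).symm
    rw [hgoal]
    apply tendsto_integral_of_dominated_convergence (fun x => |diverg η x|)
    · intro k
      exact (((huc k).continuous.max (hvc k).continuous).mul
        (continuous_diverg hη.1)).aestronglyMeasurable
    · exact (integrable_diverg_testVF hη).abs
    · intro k
      apply Eventually.of_forall
      intro x
      rw [Real.norm_eq_abs, abs_mul]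
      have h1 : |max (u k x) (v k x)| ≤ 1 := by
        rw [abs_le]
        constructor
        · have := (hu01 k x).1; have := (hv01 k x).1
          simp only [le_max_iff]
          left; linarith
        · have := (hu01 k x).2; have := (hv01 k x).2
          simp only [max_le_iff]
          constructor <;> linarith
      calc |max (u k x) (v k x)| * |diverg η x| ≤ 1 * |diverg η x| :=
            mul_le_mul_of_nonneg_right h1 (abs_nonneg _)
        _ = |diverg η x| := one_mul _
    · filter_upwards [haeu, haev] with x hx1 hx2
      have hmax : Tendsto (fun k => max (u k x) (v k x)) atTop (𝓝 (max (χE x) (χG x))) :=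
        hx1.max hx2
      have heq : (E ∪ G).indicator (diverg η) x = max (χE x) (χG x) * diverg η x := by
        by_cases h1 : x ∈ E <;> by_cases h2 : x ∈ G <;>
          simp [hχE, hχG, Set.indicator_of_mem, Set.indicator_of_notMem, h1, h2,
            Set.mem_union]
      rw [heq]
      exact hmax.mul tendsto_const_nhds
  exact le_of_tendsto (hlim1.add hlim2) (Eventually.of_forall hstepB)

lemma perimeter_submodular {E G : Set (Euc n)} (hE : MeasurableSet E) (hG : MeasurableSet G)
    (hEfin : perimeter E < ⊤) (hGfin : perimeter G < ⊤) :
    perimeter (E ∩ G) + perimeter (E ∪ G) ≤ perimeter E + perimeter G := by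
  set R : ℝ := (perimeter E).toReal + (perimeter G).toReal with hR
  have hR0 : 0 ≤ R := add_nonneg ENNReal.toReal_nonneg ENNReal.toReal_nonneg
  have hmain : perimeter (E ∩ G) + perimeter (E ∪ G) ≤ ENNReal.ofReal R := by
    rw [perimeter, perimeter]
    apply ENNReal.biSup_add_biSup_le ⟨_, zero_mem_testVF (n := n)⟩ ⟨_, zero_mem_testVF (n := n)⟩
    intro ξ hξ η hη
    have hk := key_ineq hE hG hEfin hGfin hξ hη
    have hkξ : (∫ x in E ∩ G, diverg ξ x) ≤ R := by
      have := key_ineq hE hG hEfin hGfin hξ (zero_mem_testVF (n := n))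
      simpa [diverg_zero] using this
    have hkη : (∫ x in E ∪ G, diverg η x) ≤ R := by
      have := key_ineq hE hG hEfin hGfin (zero_mem_testVF (n := n)) hη
      simpa [diverg_zero] using this
    rcases le_or_gt (∫ x in E ∩ G, diverg ξ x) 0 with h1 | h1
    · rw [ENNReal.ofReal_of_nonpos h1, zero_add]
      exact (ENNReal.ofReal_le_ofReal hkη)
    rcases le_or_gt (∫ x in E ∪ G, diverg η x) 0 with h2 | h2
    · rw [ENNReal.ofReal_of_nonpos h2, add_zero]
      exact (ENNReal.ofReal_le_ofReal hkξ)
    rw [← ENNReal.ofReal_add h1.le h2.le]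
    exact ENNReal.ofReal_le_ofReal hk
  calc perimeter (E ∩ G) + perimeter (E ∪ G) ≤ ENNReal.ofReal R := hmain
    _ = perimeter E + perimeter G := by
      rw [hR, ENNReal.ofReal_add ENNReal.toReal_nonneg ENNReal.toReal_nonneg,
        ENNReal.ofReal_toReal hEfin.ne, ENNReal.ofReal_toReal hGfin.ne]

end AuxLemmas

/-- `E` is outward minimizing in the open set `Ω` if and only if
`P(E ∩ G) ≤ P(G)` for all sets of finite perimeter `G ⊆ Ω`. -/
theorem outwardMinimizing_iff (Ω E : Set (Euc n)) (hΩ : IsOpen Ω)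
    (hE : MeasurableSet E) (hEΩ : E ⊆ Ω) (hEfin : perimeter E < ⊤) :
    OutwardMinimizing Ω E ↔
      ∀ G : Set (Euc n), MeasurableSet G → G ⊆ Ω → perimeter G < ⊤ →
        perimeter (E ∩ G) ≤ perimeter G := by
  constructor
  · intro hmin G hGm hGΩ hGfin
    have hsub := perimeter_submodular hE hGm hEfin hGfin
    have hEU : perimeter E ≤ perimeter (E ∪ G) :=
      hmin (E ∪ G) (hE.union hGm) Set.subset_union_left (Set.union_subset hEΩ hGΩ)
    have hUfin : perimeter (E ∪ G) < ⊤ := by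
      by_contra htop
      push_neg at htop
      have h1 : perimeter (E ∪ G) = ⊤ := top_le_iff.mp htop
      rw [h1] at hsub
      have : perimeter E + perimeter G = ⊤ := by
        have := le_antisymm le_top (le_trans (le_add_left le_rfl) hsub)
        exact this.symm ▸ rfl
      exact (ENNReal.add_lt_top.mpr ⟨hEfin, hGfin⟩).ne this
    have hchain : perimeter (E ∩ G) + perimeter (E ∪ G)
        ≤ perimeter G + perimeter (E ∪ G) := by
      calc perimeter (E ∩ G) + perimeter (E ∪ G) ≤ perimeter E + perimeter G := hsub
        _ ≤ perimeter (E ∪ G) + perimeter G := add_le_add_left hEU _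
        _ = perimeter G + perimeter (E ∪ G) := add_comm _ _
    exact ENNReal.le_of_add_le_add_right hUfin.ne hchain
  · intro h F hFm hEF hFΩ
    rcases lt_or_ge (perimeter F) ⊤ with hPF | hPF
    · have := h F hFm hFΩ hPF
      rwa [Set.inter_eq_left.mpr hEF] at this
    · exact le_trans le_top hPF

end
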